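/- Let n be a positive integer. Define g : ℝⁿ → ℝ by g(x) = ∑ i, log(1 + |x i|). Then for every fixed u ∈ ℝⁿ, the function h(x) = g(x) + (1/2)‖x - u‖² is convex on ℝⁿ. -/

import Mathlib

open Real Set

-- ψ(s) = log(1+s) + s²/2, convex and monotone on [0,∞)
private lemma psi_convex : ConvexOn ℝ (Ici (0:ℝ)) (fun s => Real.log (1 + s) + s ^ 2 / 2) := by
  have hint : interior (Ici (0:ℝ)) = Ioi 0 := interior_Ici
  apply convexOn_of_hasDerivWithinAt2_nonneg (f' := fun s => (1 + s)⁻¹ + s)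
    (f'' := fun s => -1 / (1 + s) ^ 2 + 1) (convex_Ici 0)
  · apply ContinuousOn.add
    · refine Real.continuousOn_log.comp (by fun_prop) (fun x hx => ?_)
      simp only [mem_Ici] at hx
      simp only [mem_compl_iff, mem_singleton_iff]
      intro h; nlinarith
    · fun_prop
  · intro x hx
    rw [hint] at hx
    have h1 : HasDerivAt (fun s : ℝ => 1 + s) 1 x := (hasDerivAt_id x).const_add 1
    have h2 : HasDerivAt (fun s : ℝ => Real.log (1 + s)) ((1 + x)⁻¹ * 1) x :=
      (Real.hasDerivAt_log (by simp at hx; nlinarith)).comp x h1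
    have h3 : HasDerivAt (fun s : ℝ => s ^ 2 / 2) (2 * x ^ 1 / 2) x :=
      (hasDerivAt_pow 2 x).div_const 2
    have := h2.add h3
    rw [show (1 + x)⁻¹ + x = (1 + x)⁻¹ * 1 + 2 * x ^ 1 / 2 by ring]
    exact this.hasDerivWithinAt
  · intro x hx
    rw [hint] at hx
    have hne : (1 + x) ≠ 0 := by simp at hx; nlinarith
    have h1 : HasDerivAt (fun s : ℝ => 1 + s) 1 x := (hasDerivAt_id x).const_add 1
    have h2 : HasDerivAt (fun s : ℝ => (1 + s)⁻¹) (-1 / (1 + x) ^ 2) x := h1.inv hne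
    have := h2.add (hasDerivAt_id x)
    exact this.hasDerivWithinAt
  · intro x hx
    rw [hint] at hx
    simp only [mem_Ioi] at hx
    have : (1:ℝ) ≤ (1 + x) ^ 2 := by nlinarith
    have h2 : -1 / (1 + x) ^ 2 ≥ -1 := by
      rw [ge_iff_le, neg_le, neg_div, neg_neg]
      rw [div_le_one (by nlinarith)]
      linarith
    linarith

private lemma psi_mono : MonotoneOn (fun s => Real.log (1 + s) + s ^ 2 / 2) (Ici (0:ℝ)) := by
  intro a ha b hb hab
  simp only [mem_Ici] at ha hb
  have h1 : Real.log (1 + a) ≤ Real.log (1 + b) :=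
    Real.log_le_log (by linarith) (by linarith)
  have h2 : a ^ 2 ≤ b ^ 2 := by nlinarith
  simp only
  linarith

private lemma abs_image_univ : (fun t : ℝ => |t|) '' univ = Ici 0 := by
  ext x
  constructor
  · rintro ⟨y, -, rfl⟩; exact abs_nonneg y
  · intro hx; exact ⟨x, mem_univ x, abs_of_nonneg hx⟩

-- φ(t) = log(1+|t|) + t²/2 convex on ℝ
private lemma phi_convex : ConvexOn ℝ univ (fun t : ℝ => Real.log (1 + |t|) + t ^ 2 / 2) := by
  have habs : ConvexOn ℝ univ (fun t : ℝ => |t|) := by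
    exact convexOn_univ_norm (E := ℝ)
  have hcomp : ConvexOn ℝ univ ((fun s => Real.log (1 + s) + s ^ 2 / 2) ∘ (fun t : ℝ => |t|)) := by
    apply ConvexOn.comp
    · rw [abs_image_univ]; exact psi_convex
    · exact habs
    · rw [abs_image_univ]; exact psi_mono
  have : ((fun s => Real.log (1 + s) + s ^ 2 / 2) ∘ (fun t : ℝ => |t|)) =
      fun t : ℝ => Real.log (1 + |t|) + t ^ 2 / 2 := by
    funext t; simp [Function.comp, sq_abs]
  rwa [this] at hcomp

private lemma affine_convex (a c : ℝ) : ConvexOn ℝ univ (fun t : ℝ => a * t + c) := by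
  refine ⟨convex_univ, fun x _ y _ p q hp hq hpq => le_of_eq ?_⟩
  simp only [smul_eq_mul]
  linear_combination (-c) * hpq

theorem stmt_7 (n : ℕ) (hn : 0 < n)
    (g : EuclideanSpace ℝ (Fin n) → ℝ)
    (hg : ∀ x, g x = ∑ i, Real.log (1 + |x i|))
    (u : EuclideanSpace ℝ (Fin n)) :
    ConvexOn ℝ Set.univ (fun x => g x + (1 / 2) * ‖x - u‖ ^ 2) := by
  -- q i t = log(1+|t|) + (t - u i)²/2
  set q : Fin n → ℝ → ℝ := fun i t => Real.log (1 + |t|) + t ^ 2 / 2 + (-(u i) * t + (u i) ^ 2 / 2) with hq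
  have hqconv : ∀ i, ConvexOn ℝ univ (q i) := fun i =>
    phi_convex.add (affine_convex (-(u i)) ((u i) ^ 2 / 2))
  have hcoord : ∀ i, ConvexOn ℝ univ (fun x : EuclideanSpace ℝ (Fin n) => q i (x i)) := by
    intro i
    refine ⟨convex_univ, fun x _ y _ a b ha hb hab => ?_⟩
    have := (hqconv i).2 (mem_univ (x i)) (mem_univ (y i)) ha hb hab
    simpa [PiLp.add_apply, PiLp.smul_apply, smul_eq_mul] using this
  have hsum : ConvexOn ℝ univ (fun x : EuclideanSpace ℝ (Fin n) => ∑ i, q i (x i)) := by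
    classical
    induction (Finset.univ : Finset (Fin n)) using Finset.cons_induction with
    | empty => simpa using convexOn_const (0:ℝ) convex_univ
    | cons j s hjs ih =>
      simp only [Finset.sum_cons]
      exact (hcoord j).add ih
  have heq : (fun x : EuclideanSpace ℝ (Fin n) => g x + (1 / 2) * ‖x - u‖ ^ 2) =
      fun x => ∑ i, q i (x i) := by
    funext x
    have hnorm : ‖x - u‖ ^ 2 = ∑ i, (x i - u i) ^ 2 := by
      rw [EuclideanSpace.norm_eq]
      rw [Real.sq_sqrt (Finset.sum_nonneg fun i _ => sq_nonneg _)]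
      congr 1; funext i
      simp [Real.norm_eq_abs, sq_abs]
    rw [hg, hnorm, Finset.mul_sum, ← Finset.sum_add_distrib]
    congr 1; funext i
    simp only [hq]
    ring
  rw [heq]
  exact hsum
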